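/- Let p be a prime and m ≥ 2, R = ℤ/p^m ℤ, and P = (p). Then P is a prime ideal of R with |P| = p^{m-1}, and Γ_P(R) is isomorphic to the complete split graph K_{p^{m-1}-1} ∨ K̄_{p^{m-1}(p-1)}. -/

import Mathlib

def primeIdealGraph (R : Type*) [CommRing R] (P : Ideal R) :
    SimpleGraph {x : R // x ≠ 0} where
  Adj x y := x ≠ y ∧ (x : R) * y ∈ P
  symm := by
    refine ⟨?_⟩
    rintro x y ⟨h, hm⟩
    exact ⟨h.symm, by rwa [mul_comm]⟩
  loopless := by refine ⟨?_⟩; rintro x ⟨h, _⟩; exact h rfl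

def joinGraph {α β : Type*} (G : SimpleGraph α) (H : SimpleGraph β) :
    SimpleGraph (α ⊕ β) where
  Adj u v :=
    Sum.elim (fun x => Sum.elim (fun y => G.Adj x y) (fun _ => True) v)
             (fun x => Sum.elim (fun _ => True) (fun y => H.Adj x y) v) u
  symm := by refine ⟨?_⟩; rintro (x|x) (y|y) h <;> simp_all [SimpleGraph.adj_comm]
  loopless := by refine ⟨?_⟩; rintro (x|x) h <;> simp_all

/-- For `R = ℤ/p^mℤ` and `P = (p)`: `P` is prime, `|P| = p^{m-1}`, and
`Γ_P(R) ≅ K_{p^{m-1}-1} ∨ K̄_{p^{m-1}(p-1)}`. -/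
theorem stmt_19 (p m : ℕ) (hp : p.Prime) (hm : 2 ≤ m)
    (P : Ideal (ZMod (p ^ m))) (hP : P = Ideal.span {(p : ZMod (p ^ m))}) :
    P.IsPrime ∧ Nat.card P = p ^ (m - 1) ∧
    Nonempty
      (primeIdealGraph (ZMod (p ^ m)) P ≃g
        joinGraph (⊤ : SimpleGraph (Fin (p ^ (m - 1) - 1)))
          (⊥ : SimpleGraph (Fin (p ^ (m - 1) * (p - 1))))) := by
  have hp1 : 1 < p := hp.one_lt
  have hpm : 0 < p ^ m := pow_pos hp.pos m
  haveI : NeZero (p ^ m) := ⟨hpm.ne'⟩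
  have hone : 1 < p ^ m := Nat.one_lt_pow (by omega) hp1
  haveI : Fact (1 < p ^ m) := ⟨hone⟩
  haveI : NeZero (p ^ (m - 1)) := ⟨(pow_pos hp.pos _).ne'⟩
  have hdvd : (p : ℕ) ∣ p ^ m := dvd_pow_self p (by omega)
  have hmod : ∀ a : ℕ, p ∣ a % p ^ m ↔ p ∣ a := fun a => Nat.dvd_mod_iff hdvd
  have hpow : p ^ m = p ^ (m - 1) * p := by
    rw [← pow_succ]; congr 1; omega
  have hplt : p < p ^ m := by
    calc p = p ^ 1 := (pow_one p).symm
    _ < p ^ m := Nat.pow_lt_pow_right hp1 (by omega)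
  have hmem : ∀ x : ZMod (p ^ m), x ∈ P ↔ p ∣ x.val := by
    intro x
    rw [hP, Ideal.mem_span_singleton]
    constructor
    · rintro ⟨c, rfl⟩
      rw [ZMod.val_mul, hmod]
      exact Dvd.dvd.mul_right (by rw [ZMod.val_natCast, Nat.mod_eq_of_lt hplt]) _
    · rintro ⟨t, ht⟩
      refine ⟨(t : ZMod (p ^ m)), ?_⟩
      have hx : ((x.val : ℕ) : ZMod (p ^ m)) = x := by
        rw [ZMod.natCast_val, ZMod.cast_id]
      rw [← hx, ht]; push_cast; ring
  have hPprime : P.IsPrime := by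
    refine ⟨?_, fun {x y} hxy => ?_⟩
    · rw [Ideal.ne_top_iff_one, hmem, ZMod.val_one]
      exact fun h => absurd (Nat.dvd_one.mp h) (by omega)
    · rw [hmem, ZMod.val_mul, hmod] at hxy
      rw [hmem, hmem]
      exact hp.dvd_mul.mp hxy
  -- the equivalence ZMod (p^(m-1)) ≃ {x // p ∣ x.val}
  have hval_lt : ∀ k : ZMod (p ^ (m - 1)), p * k.val < p ^ m := by
    intro k
    have := ZMod.val_lt k
    calc p * k.val < p * p ^ (m - 1) := by
          exact (Nat.mul_lt_mul_left hp.pos).mpr this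
    _ = p ^ m := by rw [mul_comm, ← hpow]
  have e : ZMod (p ^ (m - 1)) ≃ {x : ZMod (p ^ m) // p ∣ x.val} := by
    refine ⟨fun k => ⟨((p * k.val : ℕ) : ZMod (p ^ m)), ?_⟩,
      fun x => ((x.1.val / p : ℕ) : ZMod (p ^ (m - 1))), ?_, ?_⟩
    · rw [ZMod.val_natCast, hmod]; exact Dvd.intro _ rfl
    · intro k
      simp only [ZMod.val_natCast, Nat.mod_eq_of_lt (hval_lt k),
        Nat.mul_div_cancel_left _ hp.pos]
      rw [ZMod.natCast_val, ZMod.cast_id]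
    · rintro ⟨x, hx⟩
      obtain ⟨t, ht⟩ := hx
      have htlt : t < p ^ (m - 1) := by
        have := ZMod.val_lt x
        rw [ht, hpow] at this
        have h2 : p * t < p * p ^ (m - 1) := by rw [mul_comm p (p ^ (m-1))]; exact this
        exact lt_of_mul_lt_mul_left h2 (Nat.zero_le p)
      simp only [ht, Nat.mul_div_cancel_left _ hp.pos]
      ext
      simp only [ZMod.val_natCast, Nat.mod_eq_of_lt htlt]
      rw [← ht, ZMod.natCast_val, ZMod.cast_id]
  have hcardS : Fintype.card {x : ZMod (p ^ m) // p ∣ x.val} = p ^ (m - 1) := by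
    rw [← Fintype.card_congr e, ZMod.card]
  have hcardP : Nat.card P = p ^ (m - 1) := by
    have e2 : {x : ZMod (p ^ m) // x ∈ P} ≃ {x : ZMod (p ^ m) // p ∣ x.val} :=
      Equiv.subtypeEquivRight hmem
    rw [Nat.card_congr e2, Nat.card_eq_fintype_card, hcardS]
  -- counting the two vertex classes
  have hmulP : ∀ x y : ZMod (p ^ m), p ∣ x.val ∨ p ∣ y.val → x * y ∈ P := by
    intro x y h
    rw [hmem, ZMod.val_mul, hmod]
    rcases h with h | h
    · exact h.mul_right _
    · exact h.mul_left _
  have hmulP' : ∀ x y : ZMod (p ^ m), x * y ∈ P → p ∣ x.val ∨ p ∣ y.val := by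
    intro x y h
    rw [hmem, ZMod.val_mul, hmod] at h
    exact hp.dvd_mul.mp h
  have hzero : p ∣ (0 : ZMod (p ^ m)).val := by
    rw [ZMod.val_zero]; exact dvd_zero p
  have cardA : Fintype.card {z : {x : ZMod (p ^ m) // x ≠ 0} // p ∣ (z : ZMod (p ^ m)).val}
      = p ^ (m - 1) - 1 := by
    have e1 : {z : {x : ZMod (p ^ m) // x ≠ 0} // p ∣ (z : ZMod (p ^ m)).val}
        ≃ {y : {x : ZMod (p ^ m) // p ∣ x.val} // ¬ (y : ZMod (p ^ m)) = 0} :=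
      (Equiv.subtypeSubtypeEquivSubtypeInter _ _).trans
        ((Equiv.subtypeEquivRight (fun x => by tauto)).trans
          (Equiv.subtypeSubtypeEquivSubtypeInter
            (fun x : ZMod (p ^ m) => p ∣ x.val) (fun x => ¬ x = 0)).symm)
    rw [Fintype.card_congr e1, Fintype.card_subtype_compl, hcardS]
    congr 1
    rw [Fintype.card_eq_one_iff]
    refine ⟨⟨⟨0, hzero⟩, rfl⟩, fun y => Subtype.ext (Subtype.ext y.2)⟩
  have cardB : Fintype.card {z : {x : ZMod (p ^ m) // x ≠ 0} // ¬ p ∣ (z : ZMod (p ^ m)).val}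
      = p ^ (m - 1) * (p - 1) := by
    have e1 : {z : {x : ZMod (p ^ m) // x ≠ 0} // ¬ p ∣ (z : ZMod (p ^ m)).val}
        ≃ {x : ZMod (p ^ m) // ¬ p ∣ x.val} :=
      (Equiv.subtypeSubtypeEquivSubtypeInter
          (fun x : ZMod (p ^ m) => x ≠ 0) (fun x => ¬ p ∣ x.val)).trans
        (Equiv.subtypeEquivRight (fun x =>
          ⟨fun h => h.2, fun h => ⟨fun h0 => h (by rw [h0]; exact hzero), h⟩⟩))
    rw [Fintype.card_congr e1, Fintype.card_subtype_compl, hcardS, ZMod.card,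
      hpow, Nat.mul_sub, mul_one]
  let eA := Fintype.equivFinOfCardEq cardA
  let eB := Fintype.equivFinOfCardEq cardB
  let E : {x : ZMod (p ^ m) // x ≠ 0} ≃ (Fin (p ^ (m - 1) - 1) ⊕ Fin (p ^ (m - 1) * (p - 1))) :=
    (Equiv.sumCompl (fun z : {x : ZMod (p ^ m) // x ≠ 0} =>
      p ∣ (z : ZMod (p ^ m)).val)).symm.trans (Equiv.sumCongr eA eB)
  have hE_pos : ∀ (z : {x : ZMod (p ^ m) // x ≠ 0}) (h : p ∣ (z : ZMod (p ^ m)).val),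
      E z = Sum.inl (eA ⟨z, h⟩) := by
    intro z h
    show Sum.map _ _ ((Equiv.sumCompl _).symm z) = _
    rw [Equiv.sumCompl_symm_apply_of_pos (p := fun a : {x : ZMod (p ^ m) // x ≠ 0} => p ∣ (a : ZMod (p ^ m)).val) (a := z) h, Sum.map_inl]
  have hE_neg : ∀ (z : {x : ZMod (p ^ m) // x ≠ 0}) (h : ¬ p ∣ (z : ZMod (p ^ m)).val),
      E z = Sum.inr (eB ⟨z, h⟩) := by
    intro z h
    show Sum.map _ _ ((Equiv.sumCompl _).symm z) = _
    rw [Equiv.sumCompl_symm_apply_of_neg (p := fun a : {x : ZMod (p ^ m) // x ≠ 0} => p ∣ (a : ZMod (p ^ m)).val) (a := z) h, Sum.map_inr]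
  refine ⟨hPprime, hcardP, ⟨⟨E, @fun x y => ?_⟩⟩⟩
  by_cases hx : p ∣ (x : ZMod (p ^ m)).val <;> by_cases hy : p ∣ (y : ZMod (p ^ m)).val
  · rw [hE_pos x hx, hE_pos y hy]
    simp only [joinGraph, primeIdealGraph, Sum.elim_inl, Sum.elim_inr,
      SimpleGraph.top_adj, SimpleGraph.bot_adj]
    constructor
    · intro h
      refine ⟨fun hxy => h (congrArg eA (Subtype.ext hxy)), hmulP _ _ (Or.inl hx)⟩
    · rintro ⟨hxy, -⟩ h
      exact hxy (Subtype.ext_iff.mp (eA.injective h))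
  · rw [hE_pos x hx, hE_neg y hy]
    simp only [joinGraph, primeIdealGraph, Sum.elim_inl, Sum.elim_inr]
    refine ⟨fun _ => ⟨fun h => hy (h ▸ hx), hmulP _ _ (Or.inl hx)⟩, fun _ => trivial⟩
  · rw [hE_neg x hx, hE_pos y hy]
    simp only [joinGraph, primeIdealGraph, Sum.elim_inl, Sum.elim_inr]
    refine ⟨fun _ => ⟨fun h => hx (h ▸ hy), hmulP _ _ (Or.inr hy)⟩, fun _ => trivial⟩
  · rw [hE_neg x hx, hE_neg y hy]
    simp only [joinGraph, primeIdealGraph, Sum.elim_inl, Sum.elim_inr,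
      SimpleGraph.bot_adj]
    constructor
    · exact fun h => h.elim
    · rintro ⟨-, hPm⟩
      rcases hmulP' _ _ hPm with h | h
      · exact hx h
      · exact hy h
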